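/- arXiv:2204.07141 — 3 statements merged into one kernel-verified Lean document; each statement's English description precedes it below -/
import Mathlib

section
/- The function s ↦ H(softmax s) from ℝ^K to ℝ is differentiable, and its gradient at s ∈ ℝ^K has j-th component −(softmax s)_j · (log (softmax s)_j + H(softmax s)) for each j ∈ {1, …, K}. -/
open Real BigOperators

/-- The softmax map on `ℝ^K`. -/
noncomputable def softmax {K : ℕ} (s : EuclideanSpace ℝ (Fin K)) : EuclideanSpace ℝ (Fin K) :=
  (WithLp.equiv 2 (Fin K → ℝ)).symm fun k => Real.exp (s k) / ∑ j, Real.exp (s j)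

/-- Cross-entropy `H(p, q) = -∑ k, p k * log (q k)`. -/
noncomputable def crossEntropy {K : ℕ} (p q : EuclideanSpace ℝ (Fin K)) : ℝ :=
  -∑ k, p k * Real.log (q k)

/-- Entropy `H(p) = -∑ k, p k * log (p k)`. -/
noncomputable def entropy {K : ℕ} (p : EuclideanSpace ℝ (Fin K)) : ℝ :=
  -∑ k, p k * Real.log (p k)

/-- A probability vector: nonnegative components summing to 1. -/
def IsProbVec {K : ℕ} (p : EuclideanSpace ℝ (Fin K)) : Prop :=
  (∀ k, 0 ≤ p k) ∧ ∑ k, p k = 1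

/-- The uniform distribution `u_K`, with every component `1/K`. -/
noncomputable def uniformDist (K : ℕ) : EuclideanSpace ℝ (Fin K) :=
  (WithLp.equiv 2 (Fin K → ℝ)).symm fun _ => 1 / (K : ℝ)

lemma proj_hasFDerivAt' {K : ℕ} (k : Fin K) (s : EuclideanSpace ℝ (Fin K)) :
    HasFDerivAt (fun s : EuclideanSpace ℝ (Fin K) => s k)
      (EuclideanSpace.proj k : EuclideanSpace ℝ (Fin K) →L[ℝ] ℝ) s :=
  (EuclideanSpace.proj k : EuclideanSpace ℝ (Fin K) →L[ℝ] ℝ).hasFDerivAt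

lemma entropy_softmax_eq {K : ℕ} (hK : 1 ≤ K) (s : EuclideanSpace ℝ (Fin K)) :
    entropy (softmax s) = Real.log (∑ k, Real.exp (s k))
      - (∑ k, s k * Real.exp (s k)) * (∑ k, Real.exp (s k))⁻¹ := by
  have : Nonempty (Fin K) := Fin.pos_iff_nonempty.mp hK
  have hZ : (0:ℝ) < ∑ k, Real.exp (s k) :=
    Finset.sum_pos (fun k _ => Real.exp_pos _) Finset.univ_nonempty
  simp only [entropy, softmax, WithLp.equiv_symm_apply, PiLp.toLp_apply]
  have h1 : ∀ k : Fin K, (Real.exp (s k) / ∑ j, Real.exp (s j)) *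
      Real.log (Real.exp (s k) / ∑ j, Real.exp (s j)) =
      (s k * Real.exp (s k)) * (∑ j, Real.exp (s j))⁻¹
        - Real.log (∑ j, Real.exp (s j)) * (Real.exp (s k) * (∑ j, Real.exp (s j))⁻¹) := by
    intro k
    rw [Real.log_div (Real.exp_ne_zero _) hZ.ne', Real.log_exp]
    ring
  rw [Finset.sum_congr rfl fun k _ => h1 k, Finset.sum_sub_distrib, ← Finset.sum_mul,
    ← Finset.mul_sum, ← Finset.sum_mul, mul_inv_cancel₀ hZ.ne']
  ring

lemma entropy_softmax_hasFDerivAt {K : ℕ} (hK : 1 ≤ K) (s : EuclideanSpace ℝ (Fin K)) :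
    HasFDerivAt (fun s : EuclideanSpace ℝ (Fin K) => entropy (softmax s))
      (((∑ k, Real.exp (s k))⁻¹ • (∑ k, Real.exp (s k) • (EuclideanSpace.proj k : EuclideanSpace ℝ (Fin K) →L[ℝ] ℝ)))
        - ((∑ k, s k * Real.exp (s k)) • ((-((∑ k, Real.exp (s k)) ^ 2)⁻¹) • (∑ k, Real.exp (s k) • (EuclideanSpace.proj k : EuclideanSpace ℝ (Fin K) →L[ℝ] ℝ)))
          + (∑ k, Real.exp (s k))⁻¹ • (∑ k, ((s k) • (Real.exp (s k) • (EuclideanSpace.proj k : EuclideanSpace ℝ (Fin K) →L[ℝ] ℝ))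
            + Real.exp (s k) • (EuclideanSpace.proj k : EuclideanSpace ℝ (Fin K) →L[ℝ] ℝ))))) s := by
  have : Nonempty (Fin K) := Fin.pos_iff_nonempty.mp hK
  have heq : (fun s : EuclideanSpace ℝ (Fin K) => entropy (softmax s)) =
      fun s : EuclideanSpace ℝ (Fin K) => Real.log (∑ k, Real.exp (s k))
        - (∑ k, s k * Real.exp (s k)) * (∑ k, Real.exp (s k))⁻¹ :=
    funext fun s => entropy_softmax_eq hK s
  have hZ : (0:ℝ) < ∑ k, Real.exp (s k) :=
    Finset.sum_pos (fun k _ => Real.exp_pos _) Finset.univ_nonempty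
  have hZ' : HasFDerivAt (fun s : EuclideanSpace ℝ (Fin K) => ∑ k, Real.exp (s k))
      (∑ k, Real.exp (s k) • (EuclideanSpace.proj k : EuclideanSpace ℝ (Fin K) →L[ℝ] ℝ)) s :=
    HasFDerivAt.fun_sum fun k _ => (proj_hasFDerivAt' k s).exp
  have hN' : HasFDerivAt (fun s : EuclideanSpace ℝ (Fin K) => ∑ k, s k * Real.exp (s k))
      (∑ k, ((s k) • (Real.exp (s k) • (EuclideanSpace.proj k : EuclideanSpace ℝ (Fin K) →L[ℝ] ℝ))
        + Real.exp (s k) • (EuclideanSpace.proj k : EuclideanSpace ℝ (Fin K) →L[ℝ] ℝ))) s :=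
    HasFDerivAt.fun_sum fun k _ => (proj_hasFDerivAt' k s).mul (proj_hasFDerivAt' k s).exp
  have hinv : HasFDerivAt (fun s : EuclideanSpace ℝ (Fin K) => (∑ k, Real.exp (s k))⁻¹)
      ((-((∑ k, Real.exp (s k)) ^ 2)⁻¹) • (∑ k, Real.exp (s k) • (EuclideanSpace.proj k : EuclideanSpace ℝ (Fin K) →L[ℝ] ℝ))) s :=
    (hasDerivAt_inv hZ.ne').comp_hasFDerivAt s hZ'
  have hlog : HasFDerivAt (fun s : EuclideanSpace ℝ (Fin K) => Real.log (∑ k, Real.exp (s k)))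
      ((∑ k, Real.exp (s k))⁻¹ • (∑ k, Real.exp (s k) • (EuclideanSpace.proj k : EuclideanSpace ℝ (Fin K) →L[ℝ] ℝ))) s :=
    hZ'.log hZ.ne'
  rw [heq]
  exact hlog.sub (hN'.mul hinv)

/-- The map `s ↦ H(softmax s)` is differentiable, and the `j`-th component of its
gradient at `s` is `-(softmax s)_j * (log (softmax s)_j + H(softmax s))`. -/
theorem entropy_softmax_differentiable_and_gradient (K : ℕ) (hK : 1 ≤ K) :
    Differentiable ℝ (fun s : EuclideanSpace ℝ (Fin K) => entropy (softmax s)) ∧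
      ∀ s : EuclideanSpace ℝ (Fin K), ∀ j : Fin K,
        gradient (fun s => entropy (softmax s)) s j =
          -(softmax s j) * (Real.log (softmax s j) + entropy (softmax s)) := by
  have : Nonempty (Fin K) := Fin.pos_iff_nonempty.mp hK
  constructor
  · exact fun s => (entropy_softmax_hasFDerivAt hK s).differentiableAt
  · intro s j
    have hZ : (0:ℝ) < ∑ k, Real.exp (s k) :=
      Finset.sum_pos (fun k _ => Real.exp_pos _) Finset.univ_nonempty
    have hf := entropy_softmax_hasFDerivAt hK s
    have hgrad : gradient (fun s => entropy (softmax s)) s j =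
        fderiv ℝ (fun s => entropy (softmax s)) s (EuclideanSpace.single j (1:ℝ)) := by
      have h2 : gradient (fun s => entropy (softmax s)) s j =
          @inner ℝ _ _ (gradient (fun s => entropy (softmax s)) s) (EuclideanSpace.single j (1:ℝ)) := by
        rw [EuclideanSpace.inner_single_right]; simp
      rw [h2]
      unfold gradient
      rw [InnerProductSpace.toDual_symm_apply]
    rw [hgrad, hf.fderiv]
    have hsingle : ∀ k : Fin K, (EuclideanSpace.single j (1:ℝ)) k = if k = j then 1 else 0 :=
      fun k => EuclideanSpace.single_apply j 1 k
    simp only [ContinuousLinearMap.sub_apply, ContinuousLinearMap.add_apply,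
      ContinuousLinearMap.smul_apply, ContinuousLinearMap.coe_sum', Finset.sum_apply,
      PiLp.proj_apply, smul_eq_mul, hsingle, mul_ite, mul_one, mul_zero, Finset.sum_add_distrib,
      Finset.sum_ite_eq', Finset.mem_univ, if_true]
    have hsm : softmax s j = Real.exp (s j) / ∑ k, Real.exp (s k) := by
      simp [softmax, WithLp.equiv_symm_apply, PiLp.toLp_apply]
    rw [hsm, entropy_softmax_eq hK s, Real.log_div (Real.exp_ne_zero _) hZ.ne', Real.log_exp]
    field_simp
    ring
end

section
/- (Non-collapsing gradients, single-view form of Proposition 1.) Let K > 1, let s ∈ ℝ^K be a logit vector, and let p⁺ ∈ ℝ^K be a probability vector with p⁺ ≠ u_K (the sharpened target is not uniform). Then the sum of the Euclidean norm of the gradient at s of s ↦ H(p⁺, softmax s) and the Euclidean norm of the gradient at s of s ↦ H(softmax s) is strictly positive; equivalently, at least one of these two gradients is nonzero. -/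
open Real BigOperators

section Aux

variable {K : ℕ}

@[simp] lemma euclid_proj_apply (i : Fin K) (v : EuclideanSpace ℝ (Fin K)) :
    EuclideanSpace.proj (𝕜 := ℝ) i v = v i := rfl

lemma softmax_apply (s : EuclideanSpace ℝ (Fin K)) (k : Fin K) :
    softmax s k = Real.exp (s k) / ∑ j, Real.exp (s j) := rfl

lemma sumexp_pos (hK : 0 < K) (s : EuclideanSpace ℝ (Fin K)) :
    0 < ∑ j, Real.exp (s j) :=
  Finset.sum_pos (fun j _ => Real.exp_pos _)
    (by simpa [Finset.univ_nonempty_iff] using Fin.pos_iff_nonempty.mp hK)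

lemma coord_hasFDerivAt (i : Fin K) (s : EuclideanSpace ℝ (Fin K)) :
    HasFDerivAt (fun t : EuclideanSpace ℝ (Fin K) => t i)
      (EuclideanSpace.proj (𝕜 := ℝ) i) s :=
  (EuclideanSpace.proj (𝕜 := ℝ) i).hasFDerivAt

lemma sumexp_hasFDerivAt (s : EuclideanSpace ℝ (Fin K)) :
    HasFDerivAt (fun t : EuclideanSpace ℝ (Fin K) => ∑ j, Real.exp (t j))
      (∑ j, Real.exp (s j) • EuclideanSpace.proj (𝕜 := ℝ) j) s :=
  HasFDerivAt.fun_sum fun j _ => (coord_hasFDerivAt j s).exp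

/-- Gradient of the cross-entropy of softmax. -/
lemma crossEntropy_hasGradient (hK : 0 < K) (p : EuclideanSpace ℝ (Fin K))
    (hp1 : ∑ k, p k = 1) (s : EuclideanSpace ℝ (Fin K)) :
    HasGradientAt (fun t => crossEntropy p (softmax t)) (softmax s - p) s := by
  have hZpos := sumexp_pos hK s
  rw [hasGradientAt_iff_hasFDerivAt]
  have hfun : (fun t : EuclideanSpace ℝ (Fin K) => crossEntropy p (softmax t)) =
      fun t => Real.log (∑ j, Real.exp (t j)) - ∑ k, p k * t k := by
    funext t
    have hZ := (sumexp_pos hK t).ne'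
    simp only [crossEntropy, softmax_apply]
    have h1 : ∀ k : Fin K, p k * Real.log (Real.exp (t k) / ∑ j, Real.exp (t j)) =
        p k * t k - p k * Real.log (∑ j, Real.exp (t j)) := by
      intro k
      rw [Real.log_div (Real.exp_ne_zero _) hZ, Real.log_exp]
      ring
    rw [Finset.sum_congr rfl fun k _ => h1 k, Finset.sum_sub_distrib, ← Finset.sum_mul, hp1]
    ring
  rw [hfun]
  have h1 : HasFDerivAt (fun t : EuclideanSpace ℝ (Fin K) => Real.log (∑ j, Real.exp (t j)))
      ((∑ j, Real.exp (s j))⁻¹ • ∑ j, Real.exp (s j) • EuclideanSpace.proj (𝕜 := ℝ) j) s :=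
    (sumexp_hasFDerivAt s).log hZpos.ne'
  have h2 : HasFDerivAt (fun t : EuclideanSpace ℝ (Fin K) => ∑ k, p k * t k)
      (∑ k, p k • EuclideanSpace.proj (𝕜 := ℝ) k) s :=
    HasFDerivAt.fun_sum fun k _ => (coord_hasFDerivAt k s).const_mul (p k)
  refine (h1.sub h2).congr_fderiv ?_
  ext v
  simp only [InnerProductSpace.toDual_apply_apply, PiLp.inner_apply, RCLike.inner_apply, conj_trivial,
    ContinuousLinearMap.sub_apply, ContinuousLinearMap.smul_apply, ContinuousLinearMap.coe_sum',
    Finset.sum_apply, euclid_proj_apply, smul_eq_mul, PiLp.sub_apply, softmax_apply]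
  rw [Finset.mul_sum, ← Finset.sum_sub_distrib]
  refine Finset.sum_congr rfl fun i _ => ?_
  field_simp

set_option maxHeartbeats 1000000 in
/-- Gradient of the entropy of softmax. -/
lemma entropy_hasGradient (hK : 0 < K) (s : EuclideanSpace ℝ (Fin K)) :
    HasGradientAt (fun t => entropy (softmax t))
      ((WithLp.equiv 2 (Fin K → ℝ)).symm fun i =>
        softmax s i * ((∑ k, Real.exp (s k) * s k) / (∑ j, Real.exp (s j)) - s i)) s := by
  have hZpos := sumexp_pos hK s
  rw [hasGradientAt_iff_hasFDerivAt]
  have hfun : (fun t : EuclideanSpace ℝ (Fin K) => entropy (softmax t)) =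
      fun t => Real.log (∑ j, Real.exp (t j)) -
        (∑ k, Real.exp (t k) * t k) * (∑ j, Real.exp (t j))⁻¹ := by
    funext t
    have hZ := (sumexp_pos hK t).ne'
    simp only [entropy, softmax_apply]
    have h1 : ∀ k : Fin K, (Real.exp (t k) / ∑ j, Real.exp (t j)) *
        Real.log (Real.exp (t k) / ∑ j, Real.exp (t j)) =
        (Real.exp (t k) * t k) / (∑ j, Real.exp (t j)) -
          (Real.exp (t k) / (∑ j, Real.exp (t j))) * Real.log (∑ j, Real.exp (t j)) := by
      intro k
      rw [Real.log_div (Real.exp_ne_zero _) hZ, Real.log_exp]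
      ring
    rw [Finset.sum_congr rfl fun k _ => h1 k, Finset.sum_sub_distrib, ← Finset.sum_div,
      ← Finset.sum_mul, ← Finset.sum_div, div_self hZ, one_mul]
    field_simp
    ring
  rw [hfun]
  have h1 : HasFDerivAt (fun t : EuclideanSpace ℝ (Fin K) => Real.log (∑ j, Real.exp (t j)))
      ((∑ j, Real.exp (s j))⁻¹ • ∑ j, Real.exp (s j) • EuclideanSpace.proj (𝕜 := ℝ) j) s :=
    (sumexp_hasFDerivAt s).log hZpos.ne'
  have hA : HasFDerivAt (fun t : EuclideanSpace ℝ (Fin K) => ∑ k, Real.exp (t k) * t k)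
      (∑ k, (Real.exp (s k) • EuclideanSpace.proj (𝕜 := ℝ) k +
        s k • Real.exp (s k) • EuclideanSpace.proj (𝕜 := ℝ) k)) s :=
    HasFDerivAt.fun_sum fun k _ => ((coord_hasFDerivAt k s).exp).mul (coord_hasFDerivAt k s)
  have hinv : HasFDerivAt (fun t : EuclideanSpace ℝ (Fin K) => (∑ j, Real.exp (t j))⁻¹)
      ((-((∑ j, Real.exp (s j)) ^ 2)⁻¹) • ∑ j, Real.exp (s j) • EuclideanSpace.proj (𝕜 := ℝ) j)
      s := (hasDerivAt_inv hZpos.ne').comp_hasFDerivAt s (sumexp_hasFDerivAt s)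
  refine (h1.sub (hA.mul hinv)).congr_fderiv ?_
  ext v
  have hZ := hZpos.ne'
  simp only [InnerProductSpace.toDual_apply_apply, PiLp.inner_apply, RCLike.inner_apply, conj_trivial,
    ContinuousLinearMap.sub_apply, ContinuousLinearMap.add_apply, ContinuousLinearMap.smul_apply,
    ContinuousLinearMap.coe_sum', Finset.sum_apply, euclid_proj_apply, smul_eq_mul,
    WithLp.equiv_symm_apply, PiLp.toLp_apply, softmax_apply]
  have hL : ∑ i, (Real.exp (s i) / (∑ j, Real.exp (s j)) *
        ((∑ k, Real.exp (s k) * s k) / (∑ j, Real.exp (s j)) - s i)) * v i =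
      ((∑ k, Real.exp (s k) * s k) / (∑ j, Real.exp (s j)) ^ 2) * (∑ i, Real.exp (s i) * v i) -
        ((∑ j, Real.exp (s j))⁻¹) * (∑ i, s i * (Real.exp (s i) * v i)) := by
    rw [Finset.mul_sum, Finset.mul_sum, ← Finset.sum_sub_distrib]
    refine Finset.sum_congr rfl fun i _ => ?_
    field_simp
  rw [show ∀ f : Fin K → ℝ, ∑ i, v i * f i = ∑ i, f i * v i from
    fun f => Finset.sum_congr rfl fun i _ => mul_comm _ _]
  rw [hL, Finset.sum_congr rfl (fun k (_ : k ∈ Finset.univ) => rfl),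
    Finset.sum_add_distrib (f := fun k => Real.exp (s k) * v k)
      (g := fun k => s k * (Real.exp (s k) * v k))]
  field_simp
  ring

end Aux

/-- Non-collapsing gradients, single-view form of Proposition 1: for `K > 1`,
logits `s ∈ ℝ^K` and a probability vector `p⁺ ≠ u_K`, the sum of the Euclidean norms of the
gradients at `s` of `s ↦ H(p⁺, softmax s)` and of `s ↦ H(softmax s)` is strictly positive. -/
theorem noncollapsing_gradients_single_view (K : ℕ) (hK : 1 < K)
    (s psharp : EuclideanSpace ℝ (Fin K)) (hp : IsProbVec psharp)
    (hne : psharp ≠ uniformDist K) :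
    0 < ‖gradient (fun s => crossEntropy psharp (softmax s)) s‖ +
        ‖gradient (fun s => entropy (softmax s)) s‖ := by
  obtain ⟨hp0, hp1⟩ := hp
  have hK0 : 0 < K := Nat.lt_of_lt_of_le Nat.zero_lt_one hK.le
  have hZpos := sumexp_pos hK0 s
  by_cases hqp : softmax s = psharp
  · -- entropy gradient is nonzero
    rw [(entropy_hasGradient hK0 s).gradient]
    have hex : ∃ i, softmax s i *
        ((∑ k, Real.exp (s k) * s k) / (∑ j, Real.exp (s j)) - s i) ≠ 0 := by
      by_contra h
      push_neg at h
      set m := (∑ k, Real.exp (s k) * s k) / (∑ j, Real.exp (s j)) with hm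
      have hsm : ∀ i, s i = m := by
        intro i
        have hq : 0 < softmax s i := div_pos (Real.exp_pos _) hZpos
        have := h i
        rcases mul_eq_zero.mp this with h' | h'
        · exact absurd h' hq.ne'
        · linarith [sub_eq_zero.mp h']
      apply hne
      rw [← hqp]
      have : (fun k : Fin K => Real.exp (s k) / ∑ j, Real.exp (s j)) =
          fun _ : Fin K => 1 / (K : ℝ) := by
        funext k
        have hsum : ∑ j, Real.exp (s j) = (K : ℝ) * Real.exp m := by
          rw [Finset.sum_congr rfl fun j _ => by rw [hsm j]]
          simp [Finset.sum_const, Finset.card_univ, mul_comm]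
        rw [hsm k, hsum]
        have : (K : ℝ) ≠ 0 := Nat.cast_ne_zero.mpr hK0.ne'
        field_simp
      unfold softmax uniformDist
      exact congrArg _ this
    obtain ⟨i, hi⟩ := hex
    have hne0 : ((WithLp.equiv 2 (Fin K → ℝ)).symm fun i =>
        softmax s i * ((∑ k, Real.exp (s k) * s k) / (∑ j, Real.exp (s j)) - s i)) ≠ 0 := by
      intro h0
      apply hi
      have := congrArg (fun w : EuclideanSpace ℝ (Fin K) => w i) h0
      simpa using this
    have h1 : 0 < ‖(WithLp.equiv 2 (Fin K → ℝ)).symm fun i =>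
        softmax s i * ((∑ k, Real.exp (s k) * s k) / (∑ j, Real.exp (s j)) - s i)‖ :=
      norm_pos_iff.mpr hne0
    linarith [norm_nonneg (gradient (fun s => crossEntropy psharp (softmax s)) s)]
  · -- cross-entropy gradient is nonzero
    rw [(crossEntropy_hasGradient hK0 psharp hp1 s).gradient]
    have h1 : 0 < ‖softmax s - psharp‖ := norm_pos_iff.mpr (sub_ne_zero.mpr hqp)
    linarith [norm_nonneg (gradient (fun s => entropy (softmax s)) s)]
end

section
/- (Non-collapsing representations, Proposition 1, batch form at the logit level.) Let K > 1, B ≥ 1, M ≥ 1. Suppose the anchor logit vectors collapse, i.e., s_{i,m} = s ∈ ℝ^K for all i ∈ {1,…,B} and m ∈ {1,…,M}, so that every anchor prediction p_{i,m} = softmax s and the average prediction p̄ = (1/(MB)) ∑_{i=1}^B ∑_{m=1}^M p_{i,m} equals softmax s. Suppose each target p⁺_i ∈ ℝ^K is a probability vector with p⁺_i ≠ u_K. Then for every i ∈ {1,…,B} and m ∈ {1,…,M}, the sum of the Euclidean norm of the gradient at s of s ↦ H(p⁺_i, softmax s) and the Euclidean norm of the gradient at s of s ↦ H(softmax s) is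 strictly positive. -/
open Real BigOperators

section AuxGradients

variable {K : ℕ}

lemma Zpos [Nonempty (Fin K)] (t : EuclideanSpace ℝ (Fin K)) :
    0 < ∑ j, Real.exp (t j) :=
  Finset.sum_pos (fun j _ => Real.exp_pos _) Finset.univ_nonempty

lemma hasGradAt_ce [Nonempty (Fin K)] (p s : EuclideanSpace ℝ (Fin K))
    (hp : ∑ k, p k = 1) :
    HasGradientAt (fun t => crossEntropy p (softmax t)) (softmax s - p) s := by
  have hfun : (fun t : EuclideanSpace ℝ (Fin K) => crossEntropy p (softmax t))
      = fun t => Real.log (∑ j, Real.exp (t j)) - ∑ k, p k * t k := by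
    funext t
    have hlog : ∀ k, Real.log (softmax t k) = t k - Real.log (∑ j, Real.exp (t j)) := by
      intro k
      rw [softmax_apply, Real.log_div (Real.exp_ne_zero _) (ne_of_gt (Zpos t)), Real.log_exp]
    simp only [crossEntropy, hlog, mul_sub, Finset.sum_sub_distrib, ← Finset.sum_mul, hp]
    ring
  rw [hfun]
  have hproj : ∀ j : Fin K, HasFDerivAt (fun t : EuclideanSpace ℝ (Fin K) => t j)
      (EuclideanSpace.proj j : EuclideanSpace ℝ (Fin K) →L[ℝ] ℝ) s :=
    fun j => (EuclideanSpace.proj j : EuclideanSpace ℝ (Fin K) →L[ℝ] ℝ).hasFDerivAt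
  have hZd : HasFDerivAt (fun t : EuclideanSpace ℝ (Fin K) => ∑ j, Real.exp (t j))
      (∑ j, Real.exp (s j) • (EuclideanSpace.proj j : EuclideanSpace ℝ (Fin K) →L[ℝ] ℝ)) s :=
    HasFDerivAt.fun_sum fun j _ =>
      (hproj j).exp
  have hlogZ := (Real.hasDerivAt_log (ne_of_gt (Zpos s))).comp_hasFDerivAt s hZd
  have hlin : HasFDerivAt (fun t : EuclideanSpace ℝ (Fin K) => ∑ k, p k * t k)
      (∑ k, p k • (EuclideanSpace.proj k : EuclideanSpace ℝ (Fin K) →L[ℝ] ℝ)) s :=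
    HasFDerivAt.fun_sum fun k _ => (hproj k).const_mul (p k)
  have htot := hlogZ.sub hlin
  rw [hasGradientAt_iff_hasFDerivAt]
  refine htot.congr_fderiv ?_
  symm
  refine ContinuousLinearMap.ext fun x => ?_
  simp only [InnerProductSpace.toDual_apply_apply, PiLp.inner_apply, RCLike.inner_apply,
    starRingEnd_apply, star_trivial, ContinuousLinearMap.sub_apply,
    ContinuousLinearMap.smul_apply, ContinuousLinearMap.sum_apply,
    PiLp.proj_apply, PiLp.sub_apply, softmax_apply, smul_eq_mul,
    Finset.mul_sum]
  rw [← Finset.sum_sub_distrib]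
  apply Finset.sum_congr rfl
  intro k _

  have := ne_of_gt (Zpos (K := K) s)
  field_simp

private lemma aux_e1 (a c x A Z : ℝ) (hZ : Z ≠ 0) :
    a / Z * (A / Z - c) * x = A / (Z * Z) * (a * x) - Z⁻¹ * (a * (c * x)) := by
  field_simp

private lemma aux_fin (Z A S T : ℝ) (hZ : Z ≠ 0) :
    A / (Z * Z) * S - Z⁻¹ * T = Z⁻¹ * S - (A * (-(Z ^ 2)⁻¹ * S) + Z⁻¹ * (S + T)) := by
  field_simp
  ring

lemma hasGradAt_ent [Nonempty (Fin K)] (s : EuclideanSpace ℝ (Fin K)) :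
    HasGradientAt (fun t => entropy (softmax t))
      ((WithLp.equiv 2 (Fin K → ℝ)).symm fun k =>
        Real.exp (s k) / (∑ j, Real.exp (s j)) *
          ((∑ j, Real.exp (s j) * s j) / (∑ j, Real.exp (s j)) - s k)) s := by
  have hfun : (fun t : EuclideanSpace ℝ (Fin K) => entropy (softmax t))
      = fun t => Real.log (∑ j, Real.exp (t j))
          - (∑ k, Real.exp (t k) * t k) * (∑ j, Real.exp (t j))⁻¹ := by
    funext t
    have hZ := Zpos t
    have hlog : ∀ k, Real.log (softmax t k) = t k - Real.log (∑ j, Real.exp (t j)) := by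
      intro k
      rw [softmax_apply, Real.log_div (Real.exp_ne_zero _) (ne_of_gt hZ), Real.log_exp]
    have hterm : ∀ k, softmax t k * Real.log (softmax t k)
        = Real.exp (t k) * t k * (∑ j, Real.exp (t j))⁻¹
          - Real.log (∑ j, Real.exp (t j)) * (Real.exp (t k) / ∑ j, Real.exp (t j)) := by
      intro k
      rw [hlog, softmax_apply]
      ring
    have hsig : ∑ k, Real.exp (t k) / (∑ j, Real.exp (t j)) = 1 := by
      rw [← Finset.sum_div]
      field_simp
    simp only [entropy, hterm, Finset.sum_sub_distrib, ← Finset.sum_mul, ← Finset.mul_sum, hsig]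
    ring
  rw [hfun]
  have hproj : ∀ j : Fin K, HasFDerivAt (fun t : EuclideanSpace ℝ (Fin K) => t j)
      (EuclideanSpace.proj j : EuclideanSpace ℝ (Fin K) →L[ℝ] ℝ) s :=
    fun j => (EuclideanSpace.proj j : EuclideanSpace ℝ (Fin K) →L[ℝ] ℝ).hasFDerivAt
  have hZd : HasFDerivAt (fun t : EuclideanSpace ℝ (Fin K) => ∑ j, Real.exp (t j))
      (∑ j, Real.exp (s j) • (EuclideanSpace.proj j : EuclideanSpace ℝ (Fin K) →L[ℝ] ℝ)) s :=
    HasFDerivAt.fun_sum fun j _ =>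
      (hproj j).exp
  have hlogZ := (Real.hasDerivAt_log (ne_of_gt (Zpos s))).comp_hasFDerivAt s hZd
  have hinv := (hasDerivAt_inv (ne_of_gt (Zpos s))).comp_hasFDerivAt s hZd
  have hA : HasFDerivAt (fun t : EuclideanSpace ℝ (Fin K) => ∑ k, Real.exp (t k) * t k)
      (∑ k, (Real.exp (s k) • (EuclideanSpace.proj k : EuclideanSpace ℝ (Fin K) →L[ℝ] ℝ)
        + s k • (Real.exp (s k) • (EuclideanSpace.proj k : EuclideanSpace ℝ (Fin K) →L[ℝ] ℝ)))) s :=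
    HasFDerivAt.fun_sum fun k _ =>
      (hproj k).exp.mul (hproj k)
  have htot := hlogZ.sub (hA.mul hinv)
  rw [hasGradientAt_iff_hasFDerivAt]
  refine htot.congr_fderiv ?_
  symm
  refine ContinuousLinearMap.ext fun x => ?_
  have hZ := Zpos s
  have hZne : (∑ j, Real.exp (s j)) ≠ 0 := ne_of_gt hZ
  simp only [InnerProductSpace.toDual_apply_apply, PiLp.inner_apply, RCLike.inner_apply,
    starRingEnd_apply, star_trivial, ContinuousLinearMap.sub_apply, ContinuousLinearMap.add_apply,
    ContinuousLinearMap.smul_apply, ContinuousLinearMap.sum_apply,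
    PiLp.proj_apply, WithLp.equiv_symm_apply, PiLp.toLp_apply, smul_eq_mul]
  have e1 : ∀ k, Real.exp (s k) / (∑ j, Real.exp (s j)) *
        ((∑ j, Real.exp (s j) * s j) / (∑ j, Real.exp (s j)) - s k) * x k
      = ((∑ j, Real.exp (s j) * s j) / ((∑ j, Real.exp (s j)) * (∑ j, Real.exp (s j))))
          * (Real.exp (s k) * x k)
        - ((∑ j, Real.exp (s j))⁻¹) * (Real.exp (s k) * (s k * x k)) :=
    fun k => aux_e1 _ _ _ _ _ hZne
  have e2 : ∀ k, (Real.exp (s k) * x k + s k * (Real.exp (s k) * x k))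
      = Real.exp (s k) * x k + Real.exp (s k) * (s k * x k) := by
    intro k; ring
  rw [Finset.sum_congr rfl fun k _ => mul_comm (x k) _]
  rw [Finset.sum_congr rfl fun k _ => e1 k]
  rw [Finset.sum_sub_distrib, ← Finset.mul_sum, ← Finset.mul_sum]
  rw [Finset.sum_congr rfl fun k _ => e2 k]
  rw [Finset.sum_add_distrib]
  exact aux_fin _ _ _ _ hZne

end AuxGradients

/-- Non-collapsing representations, Proposition 1, batch form at the logit level:
if all anchor logit vectors collapse to a common `s`, then every anchor prediction equals
`softmax s`, the average prediction `p̄` equals `softmax s`, and for every `i, m` the sum of the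
Euclidean norms of the gradients at `s` of `s ↦ H(p⁺_i, softmax s)` and of `s ↦ H(softmax s)`
is strictly positive, provided each target `p⁺_i` is a probability vector different from `u_K`. -/
theorem noncollapsing_representations_batch (K B M : ℕ) (hK : 1 < K) (hB : 1 ≤ B) (hM : 1 ≤ M)
    (s : EuclideanSpace ℝ (Fin K))
    (slog : Fin B → Fin M → EuclideanSpace ℝ (Fin K))
    (hcollapse : ∀ i m, slog i m = s)
    (p : Fin B → Fin M → EuclideanSpace ℝ (Fin K))
    (hpred : ∀ i m, p i m = softmax (slog i m))
    (pbar : EuclideanSpace ℝ (Fin K))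
    (hpbar : pbar = (1 / ((M : ℝ) * (B : ℝ))) • ∑ i : Fin B, ∑ m : Fin M, p i m)
    (psharp : Fin B → EuclideanSpace ℝ (Fin K))
    (hprob : ∀ i, IsProbVec (psharp i))
    (hne : ∀ i, psharp i ≠ uniformDist K) :
    (∀ i m, p i m = softmax s) ∧ pbar = softmax s ∧
      ∀ (i : Fin B) (m : Fin M),
        0 < ‖gradient (fun s => crossEntropy (psharp i) (softmax s)) s‖ +
            ‖gradient (fun s => entropy (softmax s)) s‖ := by
  
  haveI : Nonempty (Fin K) := ⟨⟨0, by omega⟩⟩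
  have hps : ∀ i m, p i m = softmax s := fun i m => by rw [hpred, hcollapse]
  have hM0 : (0:ℝ) < (M : ℝ) := by exact_mod_cast Nat.lt_of_lt_of_le Nat.zero_lt_one hM
  have hB0 : (0:ℝ) < (B : ℝ) := by exact_mod_cast Nat.lt_of_lt_of_le Nat.zero_lt_one hB
  have hMB : ((M : ℝ) * (B : ℝ)) ≠ 0 := ne_of_gt (mul_pos hM0 hB0)
  refine ⟨hps, ?_, ?_⟩
  · rw [hpbar]
    have : ∑ i : Fin B, ∑ m : Fin M, p i m = (M * B : ℕ) • softmax s := by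
      simp [hps, Finset.sum_const, mul_comm, mul_smul]
    rw [this, ← Nat.cast_smul_eq_nsmul ℝ, smul_smul]
    push_cast
    rw [one_div, inv_mul_cancel₀ hMB, one_smul]
  · intro i m
    have hce := (hasGradAt_ce (psharp i) s (hprob i).2).gradient
    have hent := (hasGradAt_ent s).gradient
    rw [hce, hent]
    set Z := ∑ j, Real.exp (s j) with hZdef
    have hZ : 0 < Z := Zpos s
    set c := (∑ j, Real.exp (s j) * s j) / Z with hcdef
    by_cases hconst : ∀ k, s k = c
    · -- softmax s = uniform, so first gradient nonzero
      have hunif : softmax s = uniformDist K := by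
        apply PiLp.ext
        intro k
        have hZc : Z = (K : ℝ) * Real.exp c := by
          rw [hZdef]
          rw [Finset.sum_congr rfl fun j _ => by rw [hconst j]]
          simp [Finset.sum_const, mul_comm]
        have : softmax s k = Real.exp c / Z := by rw [softmax_apply, hconst k]
        have hK0 : (K : ℝ) ≠ 0 := Nat.cast_ne_zero.mpr (by omega)
        rw [this, hZc]
        simp only [uniformDist, WithLp.equiv_symm_apply, PiLp.toLp_apply]
        rw [eq_div_iff hK0]
        field_simp
      rw [hunif]
      have h1 : uniformDist K - psharp i ≠ 0 := sub_ne_zero.mpr (Ne.symm (hne i))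
      exact add_pos_of_pos_of_nonneg (norm_pos_iff.mpr h1) (norm_nonneg _)
    · push_neg at hconst
      obtain ⟨k, hk⟩ := hconst
      have hvne : ((WithLp.equiv 2 (Fin K → ℝ)).symm fun k =>
          Real.exp (s k) / Z * ((∑ j, Real.exp (s j) * s j) / Z - s k)) ≠ 0 := by
        intro h
        apply hk
        have hk0 : Real.exp (s k) / Z * (c - s k) = 0 := by
          have := congrFun (congrArg (WithLp.equiv 2 (Fin K → ℝ)) h) k
          simpa [hcdef] using this
        rcases mul_eq_zero.mp hk0 with h' | h'
        · exact absurd h' (ne_of_gt (div_pos (Real.exp_pos _) hZ))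
        · exact (sub_eq_zero.mp h').symm
      exact add_pos_of_nonneg_of_pos (norm_nonneg _) (norm_pos_iff.mpr hvne)
end
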